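/- On the upper half-plane with hyperbolic distance d, let S_H = {(y,0) : y > 0} be the geodesic given by the positive imaginary axis, and let z = (y, w). Then the hyperbolic distance from z to S_H equals arcsinh(|w|/y), and the nearest point on S_H is (√(y² + w²), 0). -/
import Mathlib


/-- Inverse hyperbolic cosine, `arcosh t = log(t + √(t² - 1))`. -/
noncomputable def arcosh (t : ℝ) : ℝ := Real.log (t + Real.sqrt (t ^ 2 - 1))

/-- The hyperbolic distance on the upper half-plane `{(y, w) : y > 0}` with metric
`y^{-2}(dy² + dw²)`, given by `cosh d = 1 + ((y₁-y₂)² + (w₁-w₂)²)/(2 y₁ y₂)`. -/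
noncomputable def hDist (p q : ℝ × ℝ) : ℝ :=
  arcosh (1 + ((p.1 - q.1) ^ 2 + (p.2 - q.2) ^ 2) / (2 * p.1 * q.1))

lemma arcosh_mono {a b : ℝ} (ha : 1 ≤ a) (hab : a ≤ b) : arcosh a ≤ arcosh b := by
  unfold arcosh
  have h1 : (0:ℝ) < a + Real.sqrt (a ^ 2 - 1) := by
    have := Real.sqrt_nonneg (a ^ 2 - 1); linarith
  apply Real.log_le_log h1
  gcongr

/-- The hyperbolic distance from `z = (y, w)` to the geodesic
`S_H = {(η, 0) : η > 0}` (the positive imaginary axis) equals `arsinh(|w|/y)`,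
and the nearest point of `S_H` is `(√(y² + w²), 0)`. -/
theorem dist_to_imaginary_axis (y w : ℝ) (hy : 0 < y) :
    sInf {d : ℝ | ∃ η : ℝ, 0 < η ∧ d = hDist (y, w) (η, 0)} =
      Real.arsinh (|w| / y) ∧
    hDist (y, w) (Real.sqrt (y ^ 2 + w ^ 2), 0) = Real.arsinh (|w| / y) := by
  set s := Real.sqrt (y ^ 2 + w ^ 2) with hs_def
  have hs2 : s ^ 2 = y ^ 2 + w ^ 2 := Real.sq_sqrt (by positivity)
  have hs : 0 < s := Real.sqrt_pos.mpr (by positivity)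
  -- the value of hDist at the nearest point
  have harg : 1 + ((y - s) ^ 2 + (w - 0) ^ 2) / (2 * y * s) = s / y := by
    field_simp
    nlinarith
  have hmain : hDist (y, w) (s, 0) = Real.arsinh (|w| / y) := by
    show arcosh (1 + ((y - s) ^ 2 + (w - 0) ^ 2) / (2 * y * s)) = _
    rw [harg]
    unfold arcosh
    rw [Real.arsinh, show (s / y) ^ 2 - 1 = (|w| / y) ^ 2 by
      field_simp; nlinarith [sq_abs w],
      Real.sqrt_sq (by positivity),
      show 1 + (|w| / y) ^ 2 = (s / y) ^ 2 by
        field_simp; nlinarith [sq_abs w],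
      Real.sqrt_sq (by positivity), add_comm]
  refine ⟨?_, hmain⟩
  have hmem : Real.arsinh (|w| / y) ∈
      {d : ℝ | ∃ η : ℝ, 0 < η ∧ d = hDist (y, w) (η, 0)} := ⟨s, hs, hmain.symm⟩
  have hlb : ∀ d ∈ {d : ℝ | ∃ η : ℝ, 0 < η ∧ d = hDist (y, w) (η, 0)},
      Real.arsinh (|w| / y) ≤ d := by
    rintro d ⟨η, hη, rfl⟩
    rw [← hmain]
    show arcosh _ ≤ arcosh (1 + ((y - η) ^ 2 + (w - 0) ^ 2) / (2 * y * η))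
    rw [harg]
    apply arcosh_mono
    · rw [le_div_iff₀ hy]; nlinarith
    · have h2 : (0:ℝ) < 2 * y * η := by positivity
      have he : 1 + ((y - η) ^ 2 + (w - 0) ^ 2) / (2 * y * η)
          = (y ^ 2 + η ^ 2 + w ^ 2) / (2 * y * η) := by field_simp; ring
      rw [he, div_le_div_iff₀ hy h2]
      nlinarith [sq_nonneg (s - η)]
  exact le_antisymm (csInf_le ⟨_, hlb⟩ hmem) (le_csInf ⟨_, hmem⟩ hlb)
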